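/- Two points (x,y) and (x',y') in [0,1)² share the same q-bit geohash g_q if and only if the first ⌈q/2⌉ binary digits of x and x' agree and the first ⌊q/2⌋ binary digits of y and y' agree; hence the preimage of each q-bit geohash value is a dyadic rectangle of width 2^{−⌈q/2⌉} and height 2^{−⌊q/2⌋}. -/

import Mathlib

noncomputable section
open Finset

/-- `d` (indexed from 1) is a binary digit expansion of `x` with no infinite
trailing tail of 1s. -/
def IsBinExp (x : ℝ) (d : ℕ → ℝ) : Prop :=
  (∀ i, d i = 0 ∨ d i = 1) ∧ (∀ n, ∃ m, n ≤ m ∧ d m = 0) ∧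
    HasSum (fun i : ℕ => d (i + 1) / 2 ^ (i + 1)) x

/-- The `q`-bit geohash, interleaving the first `⌈q/2⌉` digits of `x` with the
first `⌊q/2⌋` digits of `y`. -/
def gq (xd yd : ℕ → ℝ) (q : ℕ) : ℝ :=
  (∑ i ∈ Finset.range ((q + 1) / 2), xd (i + 1) / 2 ^ (2 * i + 1)) +
    ∑ i ∈ Finset.range (q / 2), yd (i + 1) / 2 ^ (2 * i + 2)

/-- The infinite-precision geohash: full digit interleaving. -/
def gI (xd yd : ℕ → ℝ) : ℝ :=
  (∑' i : ℕ, xd (i + 1) / 2 ^ (2 * i + 1)) + ∑' i : ℕ, yd (i + 1) / 2 ^ (2 * i + 2)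

/-! ### Auxiliary lemmas -/

lemma digit_nonneg {d : ℕ → ℝ} (hd : ∀ i, d i = 0 ∨ d i = 1) (i : ℕ) : 0 ≤ d i := by
  rcases hd i with h | h <;> simp [h]

lemma digit_le_one {d : ℕ → ℝ} (hd : ∀ i, d i = 0 ∨ d i = 1) (i : ℕ) : d i ≤ 1 := by
  rcases hd i with h | h <;> simp [h]

lemma geom_partial (n : ℕ) : ∑ i ∈ range n, (1:ℝ) / 2 ^ (i+1) = 1 - 1 / 2 ^ n := by
  induction n with
  | zero => simp
  | succ n ih =>
    rw [Finset.sum_range_succ, ih, pow_succ]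
    field_simp
    ring

lemma partial_nonneg {d : ℕ → ℝ} (hd : ∀ i, d i = 0 ∨ d i = 1) (n : ℕ) :
    0 ≤ ∑ i ∈ range n, d i / 2 ^ (i+1) :=
  Finset.sum_nonneg fun i _ => div_nonneg (digit_nonneg hd i) (by positivity)

lemma partial_le {d : ℕ → ℝ} (hd : ∀ i, d i = 0 ∨ d i = 1) (n : ℕ) :
    ∑ i ∈ range n, d i / 2 ^ (i+1) ≤ 1 - 1 / 2 ^ n := by
  calc ∑ i ∈ range n, d i / 2 ^ (i+1) ≤ ∑ i ∈ range n, (1:ℝ) / 2 ^ (i+1) := by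
        apply Finset.sum_le_sum
        intro i _
        gcongr
        exact digit_le_one hd i
    _ = 1 - 1 / 2 ^ n := geom_partial n

lemma digits_inj' : ∀ (n : ℕ) (d e : ℕ → ℝ), (∀ i, d i = 0 ∨ d i = 1) →
    (∀ i, e i = 0 ∨ e i = 1) →
    (∑ i ∈ range n, d i / 2 ^ (i+1)) = (∑ i ∈ range n, e i / 2 ^ (i+1)) →
    ∀ i < n, d i = e i := by
  intro n
  induction n with
  | zero => intro d e _ _ _ i hi; omega
  | succ n ih =>
    intro d e hd he h i hi
    have key : ∀ f : ℕ → ℝ, ∑ i ∈ range (n+1), f i / 2 ^ (i+1)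
        = (∑ i ∈ range n, f (i+1) / 2 ^ (i+1)) / 2 + f 0 / 2 := by
      intro f
      rw [Finset.sum_range_succ' (fun i => f i / 2 ^ (i+1)) n, Finset.sum_div]
      congr 1
      · exact Finset.sum_congr rfl fun i _ => by rw [pow_succ, ← div_div]
      · norm_num
    rw [key d, key e] at h
    have hbd := partial_le (d := fun i => d (i+1)) (fun i => hd (i+1)) n
    have hbe := partial_le (d := fun i => e (i+1)) (fun i => he (i+1)) n
    have hnd := partial_nonneg (d := fun i => d (i+1)) (fun i => hd (i+1)) n
    have hne := partial_nonneg (d := fun i => e (i+1)) (fun i => he (i+1)) n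
    have hp : (0:ℝ) < 1 / 2 ^ n := by positivity
    have h0 : d 0 = e 0 := by
      rcases hd 0 with h1 | h1 <;> rcases he 0 with h2 | h2 <;>
        rw [h1, h2] at h ⊢ <;> linarith
    rw [h0] at h
    have hT : (∑ i ∈ range n, d (i+1) / 2 ^ (i+1)) = ∑ i ∈ range n, e (i+1) / 2 ^ (i+1) := by
      linarith
    have := ih (fun i => d (i+1)) (fun i => e (i+1)) (fun i => hd (i+1)) (fun i => he (i+1)) hT
    rcases Nat.eq_zero_or_pos i with h' | h'
    · rw [h']; exact h0
    · obtain ⟨j, rfl⟩ := Nat.exists_eq_add_of_lt h'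
      simp only [Nat.zero_add]
      exact this j (by omega)

lemma summable_digits {d : ℕ → ℝ} (hd : ∀ i, d i = 0 ∨ d i = 1) :
    Summable (fun i : ℕ => d (i+1) / 2 ^ (i+1)) := by
  refine Summable.of_nonneg_of_le
    (fun i => div_nonneg (digit_nonneg hd _) (by positivity)) (fun i => ?_)
    (summable_geometric_of_lt_one (by norm_num) (by norm_num) : Summable fun i : ℕ => (1/2:ℝ) ^ i)
  calc d (i+1) / 2 ^ (i+1) ≤ 1 / 2 ^ (i+1) := by gcongr; exact digit_le_one hd _
    _ ≤ 1 / 2 ^ i := by gcongr <;> norm_num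
    _ = (1/2:ℝ) ^ i := by rw [div_pow, one_pow]

lemma partial_bracket {x : ℝ} {d : ℕ → ℝ}
    (hd : ∀ i, d i = 0 ∨ d i = 1) (htail : ∀ n, ∃ m, n ≤ m ∧ d m = 0)
    (hsum : HasSum (fun i : ℕ => d (i + 1) / 2 ^ (i + 1)) x) (n : ℕ) :
    (∑ i ∈ range n, d (i+1) / 2 ^ (i+1)) ≤ x ∧
      x < (∑ i ∈ range n, d (i+1) / 2 ^ (i+1)) + 1 / 2 ^ n := by
  have hs : Summable (fun i : ℕ => d (i+1) / 2 ^ (i+1)) := summable_digits hd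
  have hx : (∑ i ∈ range n, d (i+1) / 2 ^ (i+1)) + (∑' i : ℕ, d (i+n+1) / 2 ^ (i+n+1)) = x := by
    have h1 := Summable.sum_add_tsum_nat_add (f := fun i : ℕ => d (i+1) / 2 ^ (i+1)) n hs
    rw [hsum.tsum_eq] at h1
    exact h1
  have htnn : 0 ≤ ∑' i : ℕ, d (i+n+1) / 2 ^ (i+n+1) :=
    tsum_nonneg fun i => div_nonneg (digit_nonneg hd _) (by positivity)
  have hgeo : ∀ i : ℕ, (1:ℝ) / 2 ^ (i+n+1) = (1/2^(n+1)) * (1/2:ℝ)^i := by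
    intro i
    rw [div_pow, one_pow, pow_add]
    field_simp
    ring
  have hg : Summable (fun i : ℕ => (1:ℝ) / 2 ^ (i+n+1)) := by
    rw [funext hgeo]
    exact (summable_geometric_of_lt_one (by norm_num) (by norm_num)).mul_left _
  obtain ⟨m, hm, hm0⟩ := htail (n+1)
  have hlt : (∑' i : ℕ, d (i+n+1) / 2 ^ (i+n+1)) < ∑' i : ℕ, (1:ℝ) / 2 ^ (i+n+1) := by
    refine Summable.tsum_lt_tsum_of_nonneg (i := m - n - 1)
      (fun i => div_nonneg (digit_nonneg hd _) (by positivity))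
      (fun i => by gcongr; exact digit_le_one hd _) ?_ hg
    have he : m - n - 1 + n + 1 = m := by omega
    rw [he, hm0, zero_div]
    positivity
  have hgeom : (∑' i : ℕ, (1:ℝ) / 2 ^ (i+n+1)) = 1 / 2 ^ n := by
    rw [tsum_congr hgeo, tsum_mul_left, tsum_geometric_of_lt_one (by norm_num) (by norm_num)]
    rw [pow_succ]
    norm_num
    ring
  constructor
  · linarith
  · rw [hgeom] at hlt; linarith

lemma dyadic {d : ℕ → ℝ} (hd : ∀ i, d i = 0 ∨ d i = 1) (n : ℕ) :
    ∃ k : ℕ, ∑ i ∈ range n, d (i+1) / 2 ^ (i+1) = k / 2 ^ n := by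
  induction n with
  | zero => exact ⟨0, by simp⟩
  | succ n ih =>
    obtain ⟨k, hk⟩ := ih
    rcases hd (n+1) with h | h
    · refine ⟨2*k, ?_⟩
      rw [Finset.sum_range_succ, hk, h]
      push_cast
      rw [pow_succ]
      field_simp
      ring
    · refine ⟨2*k+1, ?_⟩
      rw [Finset.sum_range_succ, hk, h]
      push_cast
      rw [pow_succ]
      field_simp

open Filter Topology in
lemma exists_isBinExp {x : ℝ} (hx : x ∈ Set.Ico (0:ℝ) 1) : ∃ d, IsBinExp x d := by
  obtain ⟨hx0, hx1⟩ := hx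
  set S : ℕ → ℝ := fun n => (⌊2 ^ n * x⌋ : ℝ) / 2 ^ n with hS
  set d : ℕ → ℝ := fun n =>
    Nat.casesOn n 0 (fun m => ((⌊2 ^ (m+1) * x⌋ : ℝ) - 2 * (⌊2 ^ m * x⌋ : ℝ))) with hd
  have hdig : ∀ i, d i = 0 ∨ d i = 1 := by
    intro i
    cases i with
    | zero => exact Or.inl rfl
    | succ m =>
      have h1 : (2:ℤ) * ⌊2 ^ m * x⌋ ≤ ⌊2 ^ (m+1) * x⌋ := by
        apply Int.le_floor.2
        push_cast
        rw [pow_succ]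
        nlinarith [Int.floor_le (2 ^ m * x)]
      have h2 : ⌊2 ^ (m+1) * x⌋ < 2 * ⌊2 ^ m * x⌋ + 2 := by
        apply Int.floor_lt.2
        push_cast
        rw [pow_succ]
        nlinarith [Int.lt_floor_add_one (2 ^ m * x)]
      have hor : ⌊2 ^ (m+1) * x⌋ - 2 * ⌊2 ^ m * x⌋ = 0 ∨
          ⌊2 ^ (m+1) * x⌋ - 2 * ⌊2 ^ m * x⌋ = 1 := by omega
      rcases hor with h | h
      · left
        show ((⌊2 ^ (m+1) * x⌋ : ℝ) - 2 * (⌊2 ^ m * x⌋ : ℝ)) = 0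
        have := congrArg (fun z : ℤ => (z : ℝ)) h
        push_cast at this
        linarith
      · right
        show ((⌊2 ^ (m+1) * x⌋ : ℝ) - 2 * (⌊2 ^ m * x⌋ : ℝ)) = 1
        have := congrArg (fun z : ℤ => (z : ℝ)) h
        push_cast at this
        linarith
  have hstep : ∀ m : ℕ, S (m+1) = S m + d (m+1) / 2 ^ (m+1) := by
    intro m
    show (⌊2 ^ (m+1) * x⌋ : ℝ) / 2 ^ (m+1)
      = (⌊2 ^ m * x⌋ : ℝ) / 2 ^ m + ((⌊2 ^ (m+1) * x⌋ : ℝ) - 2 * (⌊2 ^ m * x⌋ : ℝ)) / 2 ^ (m+1)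
    rw [pow_succ]
    field_simp
    ring
  have hS0 : S 0 = 0 := by
    have : ⌊x⌋ = 0 := Int.floor_eq_zero_iff.2 ⟨hx0, hx1⟩
    simp [hS, this]
  have hpartial : ∀ n, ∑ i ∈ range n, d (i+1) / 2 ^ (i+1) = S n := by
    intro n
    induction n with
    | zero => simp [hS0]
    | succ n ih => rw [Finset.sum_range_succ, ih, ← hstep]
  have hSle : ∀ n, S n ≤ x := by
    intro n
    rw [hS, div_le_iff₀ (by positivity)]
    have := Int.floor_le (2 ^ n * x)
    linarith
  have hxlt : ∀ n, x < S n + 1 / 2 ^ n := by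
    intro n
    have h1 := Int.lt_floor_add_one (2 ^ n * x)
    rw [hS, ← add_div, lt_div_iff₀ (by positivity)]
    linarith
  have hsummable : Summable (fun i : ℕ => d (i+1) / 2 ^ (i+1)) := summable_digits hdig
  have hlimS : Tendsto S atTop (𝓝 x) := by
    apply tendsto_of_tendsto_of_tendsto_of_le_of_le
      (g := fun n : ℕ => x - 1 / 2 ^ n) (h := fun _ : ℕ => x)
    · have h2 : Tendsto (fun n : ℕ => (1:ℝ) / 2 ^ n) atTop (𝓝 0) := by
        simp only [div_eq_mul_inv, one_mul, ← inv_pow]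
        exact tendsto_pow_atTop_nhds_zero_of_lt_one (by norm_num) (by norm_num)
      have := tendsto_const_nhds (x := x) (f := atTop (α := ℕ)) |>.sub h2
      simpa using this
    · exact tendsto_const_nhds
    · intro n; linarith [hxlt n]
    · exact hSle
  have hlim : Tendsto (fun n => ∑ i ∈ range n, d (i+1) / 2 ^ (i+1)) atTop (𝓝 x) := by
    simpa only [funext hpartial] using hlimS
  have hhs : HasSum (fun i : ℕ => d (i+1) / 2 ^ (i+1)) x := by
    have h1 := hsummable.hasSum
    have h2 := h1.tendsto_sum_nat
    rwa [tendsto_nhds_unique h2 hlim] at h1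
  refine ⟨d, hdig, ?_, hhs⟩
  intro n
  by_contra hc
  push_neg at hc
  have hone : ∀ m, n ≤ m → d m = 1 := fun m hm => (hdig m).resolve_left (hc m hm)
  have hSM : ∀ M, n ≤ M → S M = S n + (1 / 2 ^ n - 1 / 2 ^ M) := by
    intro M hM
    induction M, hM using Nat.le_induction with
    | base => simp
    | succ M hM ih =>
      rw [hstep M, ih, hone (M+1) (by omega), pow_succ]
      field_simp
      ring
  have hε : 0 < S n + 1 / 2 ^ n - x := by linarith [hxlt n]
  obtain ⟨M, hM⟩ := exists_pow_lt_of_lt_one hε (by norm_num : (1/2:ℝ) < 1)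
  have hM' : (1:ℝ) / 2 ^ (max M n) ≤ (1/2:ℝ) ^ M := by
    rw [← one_div_pow]
    exact pow_le_pow_of_le_one (by norm_num) (by norm_num) (le_max_left _ _)
  have hle := hSle (max M n)
  rw [hSM (max M n) (le_max_right _ _)] at hle
  linarith

def ileave (xd yd : ℕ → ℝ) : ℕ → ℝ := fun j =>
  if j % 2 = 0 then xd (j / 2 + 1) else yd (j / 2 + 1)

lemma ileave_digits {xd yd : ℕ → ℝ} (hx : ∀ i, xd i = 0 ∨ xd i = 1)
    (hy : ∀ i, yd i = 0 ∨ yd i = 1) : ∀ j, ileave xd yd j = 0 ∨ ileave xd yd j = 1 := by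
  intro j
  unfold ileave
  split
  · exact hx _
  · exact hy _

lemma gq_eq (xd yd : ℕ → ℝ) (q : ℕ) :
    gq xd yd q = ∑ j ∈ range q, ileave xd yd j / 2 ^ (j+1) := by
  induction q with
  | zero => simp [gq]
  | succ q ih =>
    rw [Finset.sum_range_succ, ← ih]
    unfold gq
    rcases Nat.even_or_odd q with ⟨b, hb⟩ | ⟨b, hb⟩
    · have hq : q = 2 * b := by omega
      subst hq
      have e1 : (2 * b + 1 + 1) / 2 = b + 1 := by omega
      have e2 : (2 * b + 1) / 2 = b := by omega
      have e3 : 2 * b / 2 = b := by omega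
      rw [e1, e2, e3, Finset.sum_range_succ]
      have hi : ileave xd yd (2 * b) = xd (b + 1) := by
        have h1 : 2 * b % 2 = 0 := by omega
        have h2 : 2 * b / 2 = b := by omega
        simp [ileave, h1, h2]
      rw [hi]
      ring
    · have hq : q = 2 * b + 1 := by omega
      subst hq
      have e1 : (2 * b + 1 + 1 + 1) / 2 = b + 1 := by omega
      have e2 : (2 * b + 1 + 1) / 2 = b + 1 := by omega
      have e3 : (2 * b + 1) / 2 = b := by omega
      rw [e1, e2, e3, Finset.sum_range_succ (fun i => yd (i+1) / 2 ^ (2*i+2)) b]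
      have hi : ileave xd yd (2 * b + 1) = yd (b + 1) := by
        have h1 : (2 * b + 1) % 2 = 1 := by omega
        have h2 : (2 * b + 1) / 2 = b := by omega
        simp [ileave, h1, h2]
      rw [hi]
      ring_nf
      ring

lemma gq_iff {xd yd xd' yd' : ℕ → ℝ}
    (hxd : ∀ i, xd i = 0 ∨ xd i = 1) (hyd : ∀ i, yd i = 0 ∨ yd i = 1)
    (hxd' : ∀ i, xd' i = 0 ∨ xd' i = 1) (hyd' : ∀ i, yd' i = 0 ∨ yd' i = 1) (q : ℕ) :
    gq xd yd q = gq xd' yd' q ↔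
      ((∀ i < (q+1)/2, xd (i+1) = xd' (i+1)) ∧ (∀ i < q/2, yd (i+1) = yd' (i+1))) := by
  constructor
  · intro h
    rw [gq_eq, gq_eq] at h
    have key := digits_inj' q _ _ (ileave_digits hxd hyd) (ileave_digits hxd' hyd') h
    constructor
    · intro i hi
      have h2 := key (2 * i) (by omega)
      have h1 : 2 * i % 2 = 0 := by omega
      have h3 : 2 * i / 2 = i := by omega
      simpa [ileave, h1, h3] using h2
    · intro i hi
      have h2 := key (2 * i + 1) (by omega)
      have h1 : (2 * i + 1) % 2 = 1 := by omega
      have h3 : (2 * i + 1) / 2 = i := by omega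
      simpa [ileave, h1, h3] using h2
  · rintro ⟨h1, h2⟩
    unfold gq
    congr 1
    · exact Finset.sum_congr rfl fun i hi => by rw [h1 i (mem_range.1 hi)]
    · exact Finset.sum_congr rfl fun i hi => by rw [h2 i (mem_range.1 hi)]

lemma partial_eq {p : ℝ} {d d' : ℕ → ℝ} (hd : ∀ i, d i = 0 ∨ d i = 1)
    (hd'1 : ∀ i, d' i = 0 ∨ d' i = 1) (hd'2 : ∀ n, ∃ m, n ≤ m ∧ d' m = 0)
    (hd'3 : HasSum (fun i : ℕ => d' (i+1) / 2 ^ (i+1)) p) (n : ℕ)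
    (h1 : ∑ i ∈ range n, d (i+1) / 2 ^ (i+1) ≤ p)
    (h2 : p < (∑ i ∈ range n, d (i+1) / 2 ^ (i+1)) + 1 / 2 ^ n) :
    ∀ i < n, d' (i+1) = d (i+1) := by
  obtain ⟨k, hk⟩ := dyadic hd n
  obtain ⟨k', hk'⟩ := dyadic hd'1 n
  obtain ⟨hb1, hb2⟩ := partial_bracket hd'1 hd'2 hd'3 n
  rw [hk] at h1 h2
  rw [hk'] at hb1 hb2
  have h2n : (0:ℝ) < 2 ^ n := by positivity
  have hkk : k = k' := by
    rw [← add_div] at h2 hb2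
    have c1 : (k:ℝ) < (k':ℝ) + 1 := by
      have h3 := mul_lt_mul_of_pos_right (h1.trans_lt hb2) h2n
      rwa [div_mul_cancel₀ _ (ne_of_gt h2n), div_mul_cancel₀ _ (ne_of_gt h2n)] at h3
    have c2 : (k':ℝ) < (k:ℝ) + 1 := by
      have h3 := mul_lt_mul_of_pos_right (hb1.trans_lt h2) h2n
      rwa [div_mul_cancel₀ _ (ne_of_gt h2n), div_mul_cancel₀ _ (ne_of_gt h2n)] at h3
    have c1' : k < k' + 1 := by exact_mod_cast c1
    have c2' : k' < k + 1 := by exact_mod_cast c2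
    omega
  have hsum : (∑ i ∈ range n, d' (i+1) / 2 ^ (i+1)) = ∑ i ∈ range n, d (i+1) / 2 ^ (i+1) := by
    rw [hk, hk', hkk]
  exact digits_inj' n (fun i => d' (i+1)) (fun i => d (i+1))
    (fun i => hd'1 (i+1)) (fun i => hd (i+1)) hsum

theorem geohash_preimage_is_dyadic_rectangle (x y : ℝ)
    (hx : x ∈ Set.Ico (0 : ℝ) 1) (hy : y ∈ Set.Ico (0 : ℝ) 1)
    (xd yd : ℕ → ℝ) (hxd : IsBinExp x xd) (hyd : IsBinExp y yd) (q : ℕ) :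
    (∀ x' y' : ℝ, x' ∈ Set.Ico (0 : ℝ) 1 → y' ∈ Set.Ico (0 : ℝ) 1 →
      ∀ xd' yd' : ℕ → ℝ, IsBinExp x' xd' → IsBinExp y' yd' →
        (gq xd yd q = gq xd' yd' q ↔
          (∀ i ∈ Finset.Icc (1 : ℕ) ((q + 1) / 2), xd i = xd' i) ∧
            ∀ i ∈ Finset.Icc (1 : ℕ) (q / 2), yd i = yd' i)) ∧
      {p : ℝ × ℝ | p ∈ Set.Ico (0 : ℝ) 1 ×ˢ Set.Ico (0 : ℝ) 1 ∧
          ∀ xd' yd' : ℕ → ℝ, IsBinExp p.1 xd' → IsBinExp p.2 yd' →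
            gq xd' yd' q = gq xd yd q}
        = Set.Ico (∑ i ∈ Finset.range ((q + 1) / 2), xd (i + 1) / 2 ^ (i + 1))
              ((∑ i ∈ Finset.range ((q + 1) / 2), xd (i + 1) / 2 ^ (i + 1)) +
                1 / 2 ^ ((q + 1) / 2)) ×ˢ
            Set.Ico (∑ i ∈ Finset.range (q / 2), yd (i + 1) / 2 ^ (i + 1))
              ((∑ i ∈ Finset.range (q / 2), yd (i + 1) / 2 ^ (i + 1)) +
                1 / 2 ^ (q / 2)) := by
  constructor
  · intro x' y' hx' hy' xd' yd' hxd' hyd'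
    rw [gq_iff hxd.1 hyd.1 hxd'.1 hyd'.1]
    constructor
    · rintro ⟨h1, h2⟩
      constructor
      · intro i hi
        simp only [Finset.mem_Icc] at hi
        have h3 := h1 (i - 1) (by omega)
        have h4 : i - 1 + 1 = i := by omega
        rwa [h4] at h3
      · intro i hi
        simp only [Finset.mem_Icc] at hi
        have h3 := h2 (i - 1) (by omega)
        have h4 : i - 1 + 1 = i := by omega
        rwa [h4] at h3
    · rintro ⟨h1, h2⟩
      exact ⟨fun i hi => h1 (i + 1) (by simp only [Finset.mem_Icc]; omega),
        fun i hi => h2 (i + 1) (by simp only [Finset.mem_Icc]; omega)⟩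
  · ext ⟨px, py⟩
    simp only [Set.mem_setOf_eq, Set.mem_prod, Set.mem_Ico]
    constructor
    · rintro ⟨⟨hpx, hpy⟩, hall⟩
      obtain ⟨xd', hxd'⟩ := exists_isBinExp hpx
      obtain ⟨yd', hyd'⟩ := exists_isBinExp hpy
      have hg := hall xd' yd' hxd' hyd'
      rw [gq_iff hxd'.1 hyd'.1 hxd.1 hyd.1] at hg
      obtain ⟨h1, h2⟩ := hg
      have hA : ∑ i ∈ range ((q+1)/2), xd' (i+1) / 2 ^ (i+1)
          = ∑ i ∈ range ((q+1)/2), xd (i+1) / 2 ^ (i+1) :=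
        Finset.sum_congr rfl fun i hi => by rw [h1 i (mem_range.1 hi)]
      have hB : ∑ i ∈ range (q/2), yd' (i+1) / 2 ^ (i+1)
          = ∑ i ∈ range (q/2), yd (i+1) / 2 ^ (i+1) :=
        Finset.sum_congr rfl fun i hi => by rw [h2 i (mem_range.1 hi)]
      have hb1 := partial_bracket hxd'.1 hxd'.2.1 hxd'.2.2 ((q+1)/2)
      have hb2 := partial_bracket hyd'.1 hyd'.2.1 hyd'.2.2 (q/2)
      rw [hA] at hb1
      rw [hB] at hb2
      exact ⟨⟨hb1.1, hb1.2⟩, ⟨hb2.1, hb2.2⟩⟩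
    · rintro ⟨⟨hax1, hax2⟩, hay1, hay2⟩
      have hxnn := partial_nonneg (d := fun i => xd (i+1)) (fun i => hxd.1 (i+1)) ((q+1)/2)
      have hxle := partial_le (d := fun i => xd (i+1)) (fun i => hxd.1 (i+1)) ((q+1)/2)
      have hynn := partial_nonneg (d := fun i => yd (i+1)) (fun i => hyd.1 (i+1)) (q/2)
      have hyle := partial_le (d := fun i => yd (i+1)) (fun i => hyd.1 (i+1)) (q/2)
      refine ⟨⟨⟨by linarith, by linarith⟩, by linarith, by linarith⟩, ?_⟩
      intro xd' yd' hxd' hyd'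
      rw [gq_iff hxd'.1 hyd'.1 hxd.1 hyd.1]
      constructor
      · exact partial_eq hxd.1 hxd'.1 hxd'.2.1 hxd'.2.2 ((q+1)/2) hax1 hax2
      · exact partial_eq hyd.1 hyd'.1 hyd'.2.1 hyd'.2.2 (q/2) hay1 hay2
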